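/- Let γ = ((a,b),(c,d)) ∈ SL₂(ℝ). Then the derivative at θ = 0 of θ ↦ tan(v(γ·(e^{iθ} i y))) equals B(γ) = ad + bc, for every y > 0. -/

import Mathlib

open Real Complex

/-- For γ = ((a,b),(c,d)) ∈ SL₂(ℝ) and y > 0, the derivative at θ = 0 of
θ ↦ tan(v(γ·(e^{iθ}·iy))), where v(w) = −arctan(Re w/Im w), equals
B(γ) = ad + bc. -/
theorem stmt_9 (a b c d : ℝ) (hdet : a * d - b * c = 1) (y : ℝ) (hy : 0 < y) :
    HasDerivAt (fun θ : ℝ =>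
        Real.tan (-Real.arctan
          ((((a : ℂ) * (Complex.exp (θ * Complex.I) * (Complex.I * (y : ℂ))) + b) /
            ((c : ℂ) * (Complex.exp (θ * Complex.I) * (Complex.I * (y : ℂ))) + d)).re /
           (((a : ℂ) * (Complex.exp (θ * Complex.I) * (Complex.I * (y : ℂ))) + b) /
            ((c : ℂ) * (Complex.exp (θ * Complex.I) * (Complex.I * (y : ℂ))) + d)).im)))
      (a * d + b * c) 0 := by
  have key : ∀ θ : ℝ,
      Real.tan (-Real.arctan
          ((((a : ℂ) * (Complex.exp (θ * Complex.I) * (Complex.I * (y : ℂ))) + b) /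
            ((c : ℂ) * (Complex.exp (θ * Complex.I) * (Complex.I * (y : ℂ))) + d)).re /
           (((a : ℂ) * (Complex.exp (θ * Complex.I) * (Complex.I * (y : ℂ))) + b) /
            ((c : ℂ) * (Complex.exp (θ * Complex.I) * (Complex.I * (y : ℂ))) + d)).im))
      = ((a * d + b * c) * y * Real.sin θ - (b * d + a * c * y ^ 2)) / (y * Real.cos θ) := by
    intro θ
    rw [Real.tan_neg, Real.tan_arctan]
    have hexp : Complex.exp ((θ : ℂ) * Complex.I)
        = (Real.cos θ : ℂ) + (Real.sin θ : ℂ) * Complex.I := by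
      rw [Complex.exp_mul_I, Complex.ofReal_cos, Complex.ofReal_sin]
    have hN : (a : ℂ) * (Complex.exp (θ * Complex.I) * (Complex.I * (y : ℂ))) + b
        = ((b - a * y * Real.sin θ : ℝ) : ℂ) + ((a * y * Real.cos θ : ℝ) : ℂ) * Complex.I := by
      rw [hexp]; push_cast; ring_nf; rw [Complex.I_sq]; ring
    have hD : (c : ℂ) * (Complex.exp (θ * Complex.I) * (Complex.I * (y : ℂ))) + d
        = ((d - c * y * Real.sin θ : ℝ) : ℂ) + ((c * y * Real.cos θ : ℝ) : ℂ) * Complex.I := by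
      rw [hexp]; push_cast; ring_nf; rw [Complex.I_sq]; ring
    rw [hN, hD]
    by_cases hcos : Real.cos θ = 0
    · simp [Complex.div_im, hcos]
    · have hd12 : (d - c * y * Real.sin θ) ≠ 0 ∨ (c * y * Real.cos θ) ≠ 0 := by
        by_cases hc : c = 0
        · left
          have hd0 : d ≠ 0 := by
            intro h; rw [hc, h] at hdet; simp at hdet
          simpa [hc] using hd0
        · right
          exact mul_ne_zero (mul_ne_zero hc hy.ne') hcos
      have hS : (d - c * y * Real.sin θ) ^ 2 + (c * y * Real.cos θ) ^ 2 ≠ 0 := by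
        intro h
        rcases hd12 with h1 | h1 <;>
        · have hpos := (sq_nonneg _).lt_of_ne (Ne.symm (pow_ne_zero 2 h1))
          nlinarith [sq_nonneg (d - c * y * Real.sin θ), sq_nonneg (c * y * Real.cos θ)]
      have hSnorm : Complex.normSq (((d - c * y * Real.sin θ : ℝ) : ℂ)
          + ((c * y * Real.cos θ : ℝ) : ℂ) * Complex.I)
          = (d - c * y * Real.sin θ) ^ 2 + (c * y * Real.cos θ) ^ 2 := by
        simp only [Complex.normSq_apply, Complex.add_re, Complex.add_im, Complex.ofReal_re,
          Complex.ofReal_im, Complex.mul_re, Complex.mul_im, Complex.I_re, Complex.I_im]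
        ring
      have hre : ((((b - a * y * Real.sin θ : ℝ) : ℂ) + ((a * y * Real.cos θ : ℝ) : ℂ) * Complex.I)
          / (((d - c * y * Real.sin θ : ℝ) : ℂ) + ((c * y * Real.cos θ : ℝ) : ℂ) * Complex.I)).re
          = ((b - a * y * Real.sin θ) * (d - c * y * Real.sin θ)
              + (a * y * Real.cos θ) * (c * y * Real.cos θ))
            / ((d - c * y * Real.sin θ) ^ 2 + (c * y * Real.cos θ) ^ 2) := by
        rw [Complex.div_re, hSnorm]
        simp only [Complex.add_re, Complex.add_im, Complex.ofReal_re, Complex.ofReal_im,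
          Complex.mul_re, Complex.mul_im, Complex.I_re, Complex.I_im]
        ring
      have him : ((((b - a * y * Real.sin θ : ℝ) : ℂ) + ((a * y * Real.cos θ : ℝ) : ℂ) * Complex.I)
          / (((d - c * y * Real.sin θ : ℝ) : ℂ) + ((c * y * Real.cos θ : ℝ) : ℂ) * Complex.I)).im
          = (y * Real.cos θ)
            / ((d - c * y * Real.sin θ) ^ 2 + (c * y * Real.cos θ) ^ 2) := by
        rw [Complex.div_im, hSnorm]
        simp only [Complex.add_re, Complex.add_im, Complex.ofReal_re, Complex.ofReal_im,
          Complex.mul_re, Complex.mul_im, Complex.I_re, Complex.I_im]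
        rw [div_sub_div_same]
        congr 1
        linear_combination (y * Real.cos θ) * hdet
      rw [hre, him, div_div_div_comm, div_self hS, div_one, ← neg_div]
      congr 1
      linear_combination (-(a * c * y ^ 2)) * Real.sin_sq_add_cos_sq θ
  have h1 : HasDerivAt (fun θ : ℝ => (a * d + b * c) * y * Real.sin θ - (b * d + a * c * y ^ 2))
      ((a * d + b * c) * y * Real.cos 0) 0 :=
    ((Real.hasDerivAt_sin 0).const_mul ((a * d + b * c) * y)).sub_const _
  have h2 : HasDerivAt (fun θ : ℝ => y * Real.cos θ) (y * (-Real.sin 0)) 0 :=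
    (Real.hasDerivAt_cos 0).const_mul y
  have hne : y * Real.cos 0 ≠ 0 := by simp [hy.ne']
  have h3 := h1.div h2 hne
  have hfun : (fun θ : ℝ =>
        Real.tan (-Real.arctan
          ((((a : ℂ) * (Complex.exp (θ * Complex.I) * (Complex.I * (y : ℂ))) + b) /
            ((c : ℂ) * (Complex.exp (θ * Complex.I) * (Complex.I * (y : ℂ))) + d)).re /
           (((a : ℂ) * (Complex.exp (θ * Complex.I) * (Complex.I * (y : ℂ))) + b) /
            ((c : ℂ) * (Complex.exp (θ * Complex.I) * (Complex.I * (y : ℂ))) + d)).im)))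
      = fun θ : ℝ =>
        ((a * d + b * c) * y * Real.sin θ - (b * d + a * c * y ^ 2)) / (y * Real.cos θ) :=
    funext key
  rw [hfun]
  convert h3 using 1
  · rfl
  · rfl
  · rfl
  rw [Real.cos_zero, Real.sin_zero]
  field_simp
  ring
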